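/- Let X be a topological space, 𝔅 a collection of open subsets of X, n ≥ 0, and let O be a function assigning to each nonempty subset of {0,…,n} an element of 𝔅. Let H be the simplicial set whose p-simplices are pairs (g, U) where g : ⟨p⟩ → ⟨n⟩ is an arbitrary function and U assigns to each nonempty subset A ⊆ {0,…,p} an element U(A) ∈ 𝔅 with U(A) ⊆ O(g(A)), where a weakly increasing map u : ⟨q⟩ → ⟨p⟩ acts by (g, U) ↦ (g∘u, A ↦ U(u(A))). Then H is a trivial (contractible) Kan complex: H is nonempty and every map ∂Δ^p → H, p ≥ 1, extends to Δ^p. -/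

import Mathlib

open CategoryTheory Opposite Simplicial

lemma O_congr {γ : Sort*} {k : ℕ}
    (O : ∀ A : Finset (Fin k), A.Nonempty → γ)
    {A B : Finset (Fin k)} (h : A = B) {hA : A.Nonempty} {hB : B.Nonempty} :
    O A hA = O B hB := by subst h; rfl

variable {X : Type}

/-- A `p`-simplex of the simplicial set `H`: a pair `(g, U)` where `g : ⟨p⟩ → ⟨n⟩` is
an arbitrary function and `U` assigns to each nonempty subset `A ⊆ {0, …, p}` an
element `U(A) ∈ 𝔅` with `U(A) ⊆ O(g(A))`. -/
structure FillSimplex (𝔅 : Set (Set X)) (n : ℕ)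
    (O : ∀ A : Finset (Fin (n + 1)), A.Nonempty → Set X) (p : ℕ) : Type where
  g : Fin (p + 1) → Fin (n + 1)
  sec : ∀ A : Finset (Fin (p + 1)), A.Nonempty → Set X
  mem : ∀ A hA, sec A hA ∈ 𝔅
  sub : ∀ A hA, sec A hA ⊆ O (A.image g) (hA.image g)

lemma FillSimplex.ext' {𝔅 : Set (Set X)} {n : ℕ}
    {O : ∀ A : Finset (Fin (n + 1)), A.Nonempty → Set X} {p : ℕ}
    {s t : FillSimplex 𝔅 n O p} (hg : s.g = t.g)
    (hsec : ∀ A hA, s.sec A hA = t.sec A hA) : s = t := by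
  obtain ⟨g₁, u₁, m₁, s₁⟩ := s
  obtain ⟨g₂, u₂, m₂, s₂⟩ := t
  obtain rfl : g₁ = g₂ := hg
  obtain rfl : u₁ = u₂ := by funext A hA; exact hsec A hA
  rfl

/-- The simplicial set `H` whose `p`-simplices are pairs `(g, U)` with
`g : ⟨p⟩ → ⟨n⟩` arbitrary and `U(A) ∈ 𝔅`, `U(A) ⊆ O(g(A))` for every nonempty
`A ⊆ {0, …, p}`; a weakly increasing `u` acts by `(g, U) ↦ (g ∘ u, A ↦ U(u(A)))`. -/
def fillSSet (𝔅 : Set (Set X)) (n : ℕ)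
    (O : ∀ A : Finset (Fin (n + 1)), A.Nonempty → Set X) : SSet where
  obj a := FillSimplex 𝔅 n O a.unop.len
  map {a b} u := TypeCat.ofHom fun s =>
    { g := s.g ∘ u.unop.toOrderHom
      sec := fun A hA => s.sec (A.image u.unop.toOrderHom) (hA.image _)
      mem := fun A hA => s.mem _ _
      sub := fun A hA => (s.sub _ _).trans
        (le_of_eq (O_congr O (by simp [Finset.image_image]))) }
  map_id a := by
    ext s
    exact FillSimplex.ext' rfl (fun A hA => O_congr s.sec (by simp))
  map_comp {a b c} u v := by
    ext s
    exact FillSimplex.ext' rfl (fun A hA => O_congr s.sec (by simp [Finset.image_image]))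

namespace Stmt12Aux

open SimplexCategory SSet Finset

variable {𝔅 : Set (Set X)} {n : ℕ}
  {O : ∀ A : Finset (Fin (n + 1)), A.Nonempty → Set X} {p : ℕ}

/-- boundary simplex from an order hom -/
def bd {q : ℕ} (f : Fin (q + 1) →o Fin (p + 2)) (hf : ¬ Function.Surjective ⇑f) :
    (∂Δ[p + 1] : SSet).obj (op (SimplexCategory.mk q)) :=
  ⟨SSet.stdSimplex.objMk f, hf⟩

lemma bd_congr {q : ℕ} {f g : Fin (q + 1) →o Fin (p + 2)} (h : f = g)
    {hf : ¬ Function.Surjective ⇑f} {hg : ¬ Function.Surjective ⇑g} :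
    bd f hf = bd (p := p) g hg := by subst h; rfl

lemma nat (τ : (∂Δ[p + 1] : SSet) ⟶ fillSSet 𝔅 n O) {q q' : ℕ}
    (u : Fin (q' + 1) →o Fin (q + 1)) (f : Fin (q + 1) →o Fin (p + 2))
    (hf : ¬ Function.Surjective ⇑f) (hfu : ¬ Function.Surjective ⇑(f.comp u)) :
    τ.app _ (bd (f.comp u) hfu)
      = (fillSSet 𝔅 n O).map (SimplexCategory.mkHom u).op (τ.app _ (bd f hf)) := by
  have h : τ.app (op (SimplexCategory.mk q'))
        ((∂Δ[p + 1] : SSet).map (SimplexCategory.mkHom u).op (bd f hf))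
      = (fillSSet 𝔅 n O).map (SimplexCategory.mkHom u).op
        (τ.app (op (SimplexCategory.mk q)) (bd f hf)) :=
    FunctorToTypes.naturality τ (SimplexCategory.mkHom u).op (bd f hf)
  have hb : (∂Δ[p + 1] : SSet).map (SimplexCategory.mkHom u).op (bd f hf)
      = bd (f.comp u) hfu := rfl
  rw [hb] at h
  exact h

def cst {a b : ℕ} (i : Fin (b + 1)) : Fin (a + 1) →o Fin (b + 1) :=
  ⟨fun _ => i, monotone_const⟩

lemma cst_nonsurj {a : ℕ} (i : Fin (p + 2)) :
    ¬ Function.Surjective ⇑(cst (a := a) (b := p + 1) i) := by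
  intro h
  obtain ⟨b, hb⟩ := exists_ne i
  obtain ⟨x, hx⟩ := h b
  exact hb hx.symm

def gsig (τ : (∂Δ[p + 1] : SSet) ⟶ fillSSet 𝔅 n O) (i : Fin (p + 2)) : Fin (n + 1) :=
  (τ.app _ (bd (cst (a := 0) i) (cst_nonsurj i))).g 0

lemma g_consistent (τ : (∂Δ[p + 1] : SSet) ⟶ fillSSet 𝔅 n O) {q : ℕ}
    (f : Fin (q + 1) →o Fin (p + 2)) (hf : ¬ Function.Surjective ⇑f) (j : Fin (q + 1)) :
    (τ.app _ (bd f hf)).g j = gsig τ (f j) := by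
  have hcomp : f.comp (cst (a := 0) j) = cst (f j) := rfl
  have hn : ¬ Function.Surjective ⇑(f.comp (cst (a := 0) j)) := by
    rw [hcomp]; exact cst_nonsurj _
  have key := nat τ (cst (a := 0) j) f hf hn
  have e1 : bd (p := p) (cst (a := 0) (f j)) (cst_nonsurj _) = bd (f.comp (cst (a := 0) j)) hn :=
    bd_congr hcomp.symm
  unfold gsig
  rw [e1, key]
  rfl

lemma image_univ_ord {m q : ℕ} (B : Finset (Fin (q + 1))) (h : B.card = m) :
    Finset.univ.image ⇑(B.orderEmbOfFin h) = B := by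
  ext x
  simp only [Finset.mem_image, Finset.mem_univ, true_and]
  constructor
  · rintro ⟨i, rfl⟩; exact B.orderEmbOfFin_mem h i
  · intro hx
    have : x ∈ Set.range ⇑(B.orderEmbOfFin h) := by
      rw [Finset.range_orderEmbOfFin]; exact hx
    exact this

def emb (A : Finset (Fin (p + 2))) (hA : A.Nonempty) : Fin (A.card - 1 + 1) →o Fin (p + 2) :=
  (A.orderEmbOfFin (Nat.succ_pred_eq_of_pos hA.card_pos).symm).toOrderHom

lemma emb_nonsurj (A : Finset (Fin (p + 2))) (hA : A.Nonempty) (hA' : A ≠ Finset.univ) :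
    ¬ Function.Surjective ⇑(emb A hA) := by
  intro h
  apply hA'
  rw [Finset.eq_univ_iff_forall]
  intro x
  obtain ⟨i, hi⟩ := h x
  rw [← hi]
  exact A.orderEmbOfFin_mem (Nat.succ_pred_eq_of_pos hA.card_pos).symm i

noncomputable def USec (τ : (∂Δ[p + 1] : SSet) ⟶ fillSSet 𝔅 n O)
    (A : Finset (Fin (p + 2))) (hA : A.Nonempty) : Set X :=
  if h : A = Finset.univ then
    O (Finset.univ.image (gsig τ)) ⟨gsig τ 0, Finset.mem_image_of_mem _ (Finset.mem_univ 0)⟩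
  else (τ.app _ (bd (emb A hA) (emb_nonsurj A hA h))).sec Finset.univ Finset.univ_nonempty

lemma sec_eq (τ : (∂Δ[p + 1] : SSet) ⟶ fillSSet 𝔅 n O) {q : ℕ}
    (f : Fin (q + 1) →o Fin (p + 2)) (hf : ¬ Function.Surjective ⇑f)
    (B : Finset (Fin (q + 1))) (hB : B.Nonempty) :
    (τ.app _ (bd f hf)).sec B hB = USec τ (B.image ⇑f) (hB.image ⇑f) := by
  have hne : B.image ⇑f ≠ Finset.univ := by
    intro hu
    rw [Function.Surjective] at hf
    push_neg at hf
    obtain ⟨c, hc⟩ := hf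
    have : c ∈ B.image ⇑f := hu ▸ Finset.mem_univ c
    obtain ⟨b, _, hb⟩ := Finset.mem_image.mp this
    exact hc b hb
  rw [USec, dif_neg hne]
  set m := B.card - 1 with hm
  have hBm : B.card = m + 1 := (Nat.succ_pred_eq_of_pos hB.card_pos).symm
  set e : Fin (m + 1) →o Fin (q + 1) := (B.orderEmbOfFin hBm).toOrderHom with he
  have hfe : ¬ Function.Surjective ⇑(f.comp e) := fun h => hf (Function.Surjective.of_comp h)
  have step1 : (τ.app _ (bd f hf)).sec B hB
      = (τ.app _ (bd (f.comp e) hfe)).sec Finset.univ Finset.univ_nonempty := by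
    rw [nat τ e f hf hfe]
    exact O_congr (τ.app _ (bd f hf)).sec (image_univ_ord B hBm).symm
  rw [step1]
  set A := B.image ⇑f with hAdef
  have hA : A.Nonempty := hB.image ⇑f
  have hcard : A.card = A.card - 1 + 1 := (Nat.succ_pred_eq_of_pos hA.card_pos).symm
  set iso := A.orderIsoOfFin hcard with hiso
  have hmem : ∀ j : Fin (m + 1), f (e j) ∈ A := fun j =>
    Finset.mem_image_of_mem ⇑f (B.orderEmbOfFin_mem hBm j)
  set π : Fin (m + 1) →o Fin (A.card - 1 + 1) :=
    ⟨fun j => iso.symm ⟨f (e j), hmem j⟩, by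
      intro a b hab
      exact iso.symm.monotone (Subtype.mk_le_mk.mpr (f.monotone (e.monotone hab)))⟩ with hπ
  have hcomp : (emb A hA).comp π = f.comp e := by
    apply OrderHom.ext
    funext j
    exact congrArg Subtype.val (iso.apply_symm_apply ⟨f (e j), hmem j⟩)
  have hπsurj : Finset.univ.image ⇑π = Finset.univ := by
    rw [Finset.eq_univ_iff_forall]
    intro y
    have hy : ((iso y : A) : Fin (p + 2)) ∈ A := (iso y).2
    obtain ⟨b, hb, hfb⟩ := Finset.mem_image.mp hy
    have hbr : b ∈ Set.range ⇑(B.orderEmbOfFin hBm) := by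
      rw [Finset.range_orderEmbOfFin]; exact hb
    obtain ⟨j, hj⟩ := hbr
    refine Finset.mem_image.mpr ⟨j, Finset.mem_univ j, ?_⟩
    show iso.symm ⟨f (e j), hmem j⟩ = y
    have h3 : (⟨f (e j), hmem j⟩ : {x // x ∈ A}) = iso y := Subtype.ext (by
      show f (e j) = ((iso y : {x // x ∈ A}) : Fin (p + 2))
      rw [show e j = b from hj, hfb])
    rw [h3, OrderIso.symm_apply_apply]
  have hc2 : ¬ Function.Surjective ⇑((emb A hA).comp π) := by rw [hcomp]; exact hfe
  have key := nat τ π (emb A hA) (emb_nonsurj A hA hne) hc2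
  have e1 : bd (f.comp e) hfe = bd ((emb A hA).comp π) hc2 := bd_congr hcomp.symm
  rw [e1, key]
  exact O_congr _ hπsurj

noncomputable def filler (hO : ∀ A hA, O A hA ∈ 𝔅)
    (τ : (∂Δ[p + 1] : SSet) ⟶ fillSSet 𝔅 n O) : FillSimplex 𝔅 n O (p + 1) where
  g := gsig τ
  sec := USec τ
  mem A hA := by
    unfold USec
    split
    · exact hO _ _
    · exact (τ.app _ _).mem _ _
  sub A hA := by
    unfold USec
    split
    · next h =>
      subst h
      exact le_of_eq (O_congr O rfl)
    · next h =>
      refine ((τ.app _ (bd (emb A hA) (emb_nonsurj A hA h))).sub Finset.univ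
        Finset.univ_nonempty).trans (le_of_eq (O_congr O ?_))
      have hg : ∀ j, (τ.app _ (bd (emb A hA) (emb_nonsurj A hA h))).g j
          = gsig τ (emb A hA j) := g_consistent τ _ _
      calc Finset.univ.image (τ.app _ (bd (emb A hA) (emb_nonsurj A hA h))).g
          = Finset.univ.image (gsig τ ∘ ⇑(emb A hA)) := by
            congr 1; funext j; exact hg j
        _ = (Finset.univ.image ⇑(emb A hA)).image (gsig τ) := (Finset.image_image).symm
        _ = A.image (gsig τ) := by
            congr 1
            exact image_univ_ord A (Nat.succ_pred_eq_of_pos hA.card_pos).symm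

noncomputable def extend (σ : FillSimplex 𝔅 n O (p + 1)) :
    Δ[p + 1] ⟶ fillSSet 𝔅 n O where
  app m := TypeCat.ofHom fun α => (fillSSet 𝔅 n O).map α.down.op σ
  naturality m m' u := by
    ext α
    show (fillSSet 𝔅 n O).map (u.unop ≫ α.down).op σ
      = (fillSSet 𝔅 n O).map u ((fillSSet 𝔅 n O).map α.down.op σ)
    exact FunctorToTypes.map_comp_apply (fillSSet 𝔅 n O) α.down.op u σ

lemma main_eq (hO : ∀ A hA, O A hA ∈ 𝔅) (τ : (∂Δ[p + 1] : SSet) ⟶ fillSSet 𝔅 n O)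
    {q : ℕ} (f : Fin (q + 1) →o Fin (p + 2)) (hf : ¬ Function.Surjective ⇑f) :
    (fillSSet 𝔅 n O).map (SimplexCategory.mkHom f).op (filler hO τ) = τ.app _ (bd f hf) := by
  apply FillSimplex.ext'
  · funext j
    exact (g_consistent τ f hf j).symm
  · intro B hB
    exact (sec_eq τ f hf B hB).symm

end Stmt12Aux

/-- for any collection `𝔅` of open subsets of `X`, any `n ≥ 0` and any
assignment `O` of elements of `𝔅` to the nonempty subsets of `{0, …, n}`, the
simplicial set `H` is a trivial (contractible) Kan complex: it is nonempty and every
map `∂Δ^p → H` with `p ≥ 1` extends to `Δ^p`. -/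
theorem stmt12 [TopologicalSpace X] (𝔅 : Set (Set X)) (h𝔅 : ∀ B ∈ 𝔅, IsOpen B)
    (n : ℕ) (O : ∀ A : Finset (Fin (n + 1)), A.Nonempty → Set X)
    (hO : ∀ A hA, O A hA ∈ 𝔅) :
    Nonempty ((fillSSet 𝔅 n O).obj (op (SimplexCategory.mk 0))) ∧
    ∀ (p : ℕ) (τ : (∂Δ[p + 1] : SSet) ⟶ fillSSet 𝔅 n O),
      ∃ g : Δ[p + 1] ⟶ fillSSet 𝔅 n O,
        (∂Δ[p + 1]).ι ≫ g = τ := by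
  constructor
  · exact ⟨{ g := fun _ => 0
             sec := fun A hA => O (A.image fun _ => 0) (hA.image _)
             mem := fun A hA => hO _ _
             sub := fun A hA => subset_rfl }⟩
  · intro p τ
    refine ⟨Stmt12Aux.extend (Stmt12Aux.filler hO τ), ?_⟩
    apply SSet.hom_ext
    intro m
    ext α
    exact Stmt12Aux.main_eq hO τ α.1.down.toOrderHom α.2
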